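/- Let g : ℝⁿ → ℝ be defined by g(x) = max_{i∈[n]} |π(x_i) − c_i| + Σ_{i=1}^n |π(x_i) − x_i|, where c ∈ {0,1}ⁿ and π : ℝ → [0,1] is the clamp function π(t) = min(max(t,0),1). Then g is convex on ℝⁿ. -/
import Mathlib

private lemma maxNorm_pen_eq : (fun t : ℝ => |min (max t 0) 1 - t|)
    = fun t : ℝ => max (max (-t) 0) (t - 1) := by
  funext t
  rcases le_total t 0 with h0 | h0
  · have hπ : min (max t 0) 1 = 0 := by
      rw [max_eq_right h0]; exact min_eq_left zero_le_one
    rw [hπ, zero_sub, abs_neg, abs_of_nonpos h0,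
      max_eq_left (le_max_of_le_left (by linarith) : t - 1 ≤ max (-t) 0),
      max_eq_left (by linarith : (0:ℝ) ≤ -t)]
  · rcases le_total t 1 with h1 | h1
    · have hπ : min (max t 0) 1 = t := by
        rw [max_eq_left h0]; exact min_eq_left h1
      rw [hπ, sub_self, abs_zero, max_eq_right (by linarith : -t ≤ (0:ℝ)),
        max_eq_left (by linarith : t - 1 ≤ (0:ℝ))]
    · have hπ : min (max t 0) 1 = 1 := by
        rw [max_eq_left h0]; exact min_eq_right h1
      rw [hπ, abs_of_nonpos (by linarith : (1:ℝ) - t ≤ 0),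
        max_eq_right (by linarith : -t ≤ (0:ℝ)),
        max_eq_right (by linarith : (0:ℝ) ≤ t - 1)]
      ring

private lemma maxNorm_convexOn_pen :
    ConvexOn ℝ Set.univ (fun t : ℝ => |min (max t 0) 1 - t|) := by
  rw [maxNorm_pen_eq]
  exact (((concaveOn_id convex_univ).neg.sup (convexOn_const 0 convex_univ)).sup
    ((convexOn_id convex_univ).sub (concaveOn_const 1 convex_univ)))

private lemma maxNorm_convexOn_abs_sub (c : ℝ) :
    ConvexOn ℝ Set.univ (fun t : ℝ => |t - c|) := by
  refine ⟨convex_univ, fun x _ y _ a b ha hb hab => ?_⟩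
  have h : a • x + b • y - c = a • (x - c) + b • (y - c) := by
    simp only [smul_eq_mul]; linear_combination c * hab
  show |a • x + b • y - c| ≤ a • |x - c| + b • |y - c|
  rw [h]
  calc |a • (x - c) + b • (y - c)| ≤ |a • (x - c)| + |b • (y - c)| := abs_add_le _ _
    _ = a * |x - c| + b * |y - c| := by
        simp [abs_mul, abs_of_nonneg ha, abs_of_nonneg hb]
    _ = a • |x - c| + b • |y - c| := by simp [smul_eq_mul]

private lemma maxNorm_comp_eval {n : ℕ} {f : ℝ → ℝ} (hf : ConvexOn ℝ Set.univ f)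
    (i : Fin n) : ConvexOn ℝ Set.univ (fun x : Fin n → ℝ => f (x i)) := by
  refine ⟨convex_univ, fun x _ y _ a b ha hb hab => ?_⟩
  simpa using hf.2 (Set.mem_univ (x i)) (Set.mem_univ (y i)) ha hb hab

private lemma maxNorm_key_id (t c : ℝ) (hc : c = 0 ∨ c = 1) :
    |min (max t 0) 1 - c| + |min (max t 0) 1 - t| = |t - c| := by
  rcases le_total t 0 with h0 | h0
  · have hπ : min (max t 0) 1 = 0 := by
      rw [max_eq_right h0]; exact min_eq_left zero_le_one
    rw [hπ]
    rcases hc with rfl | rfl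
    · simp [abs_sub_comm]
    · rw [abs_of_nonpos (by linarith : (0:ℝ) - 1 ≤ 0),
        abs_of_nonneg (by linarith : (0:ℝ) ≤ 0 - t),
        abs_of_nonpos (by linarith : t - 1 ≤ 0)]
      ring
  · rcases le_total t 1 with h1 | h1
    · have hπ : min (max t 0) 1 = t := by
        rw [max_eq_left h0]; exact min_eq_left h1
      rw [hπ]; simp
    · have hπ : min (max t 0) 1 = 1 := by
        rw [max_eq_left h0]; exact min_eq_right h1
      rw [hπ]
      rcases hc with rfl | rfl
      · rw [sub_zero, sub_zero, abs_one,
          abs_of_nonpos (by linarith : (1:ℝ) - t ≤ 0),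
          abs_of_nonneg (by linarith : (0:ℝ) ≤ t)]
        ring
      · simp [abs_sub_comm]

private lemma maxNorm_convexOn_sum {n : ℕ} {ι : Type*} (s : Finset ι)
    (f : ι → (Fin n → ℝ) → ℝ) (h : ∀ i ∈ s, ConvexOn ℝ Set.univ (f i)) :
    ConvexOn ℝ Set.univ (fun x => ∑ i ∈ s, f i x) := by
  classical
  induction s using Finset.induction with
  | empty => simpa using convexOn_const 0 convex_univ
  | @insert a s ha ih =>
    simp only [Finset.sum_insert ha]
    exact (h a (Finset.mem_insert_self a s)).add
      (ih fun i hi => h i (Finset.mem_insert_of_mem hi))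

private lemma maxNorm_convexOn_sup' {n : ℕ} {ι : Type*} (s : Finset ι)
    (f : ι → (Fin n → ℝ) → ℝ) (h : ∀ i ∈ s, ConvexOn ℝ Set.univ (f i))
    (hs : s.Nonempty) :
    ConvexOn ℝ Set.univ (fun x => s.sup' hs fun i => f i x) := by
  classical
  induction s using Finset.induction with
  | empty => exact absurd hs (by simp)
  | @insert a s ha ih =>
    rcases s.eq_empty_or_nonempty with rfl | hne
    · simpa using h a (by simp)
    · simp only [Finset.sup'_insert hne]
      exact (h a (Finset.mem_insert_self a s)).sup
        (ih (fun i hi => h i (Finset.mem_insert_of_mem hi)) hne)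

/-- The max-norm objective function (with projection penalty) is convex. -/
theorem maxNorm_objective_convex (n : ℕ) (c : Fin n → ℝ)
    (hc : ∀ i, c i = 0 ∨ c i = 1) :
    ConvexOn ℝ Set.univ (fun x : Fin n → ℝ =>
      (⨆ i, |min (max (x i) 0) 1 - c i|) + ∑ i, |min (max (x i) 0) 1 - x i|) := by
  rcases Nat.eq_zero_or_pos n with rfl | hn
  · have : (fun x : Fin 0 → ℝ =>
        (⨆ i, |min (max (x i) 0) 1 - c i|) + ∑ i, |min (max (x i) 0) 1 - x i|)
        = fun _ => (0:ℝ) := by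
      funext x; simp
    rw [this]; exact convexOn_const 0 convex_univ
  · haveI : Nonempty (Fin n) := ⟨⟨0, hn⟩⟩
    have key : (fun x : Fin n → ℝ =>
        (⨆ i, |min (max (x i) 0) 1 - c i|) + ∑ i, |min (max (x i) 0) 1 - x i|)
        = fun x : Fin n → ℝ => Finset.univ.sup' Finset.univ_nonempty
          (fun i => |x i - c i| + ∑ j ∈ Finset.univ.erase i, |min (max (x j) 0) 1 - x j|) := by
      funext x
      rw [← Finset.sup'_univ_eq_ciSup, Finset.sup'_add]
      apply Finset.sup'_congr _ rfl
      intro i _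
      rw [← Finset.add_sum_erase _ _ (Finset.mem_univ i), ← add_assoc,
        maxNorm_key_id (x i) (c i) (hc i)]
    rw [key]
    apply maxNorm_convexOn_sup'
    intro i _
    exact (maxNorm_comp_eval (maxNorm_convexOn_abs_sub (c i)) i).add
      (maxNorm_convexOn_sum _ _ fun j _ => maxNorm_comp_eval maxNorm_convexOn_pen j)
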